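/- The subalgebra of H-invariants R^H is generated as a K-algebra by the seven elements x_1, x_2, x_3, z_1², z_2², z_3², z_1z_2z_3. -/
import Mathlib


noncomputable section

open MvPolynomial

/-- The set of two-element subsets of `{1,2,3,4}` (modelled as non-diagonal unordered
pairs of elements of `Fin 4`), indexing the variables of the polynomial ring `R`. -/
abbrev PairIdx : Type := {p : Sym2 (Fin 4) // ¬ p.IsDiag}

/-- The two-element subset `{i, j}`. -/
def pr (i j : Fin 4) (h : i ≠ j) : PairIdx := ⟨s(i, j), by simp [Sym2.mk_isDiag_iff, h]⟩

/-- The permutation of two-element subsets induced by a permutation `σ` of `{1,2,3,4}`. -/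
def pairPerm (σ : Equiv.Perm (Fin 4)) : Equiv.Perm PairIdx :=
  Equiv.subtypeEquiv
    { toFun := Sym2.map σ
      invFun := Sym2.map σ.symm
      left_inv := fun p => by
        rw [show Sym2.map σ.symm (Sym2.map σ p) = Sym2.map (σ.symm ∘ σ) p by
          rw [Sym2.map_comp]; rfl]
        simp
      right_inv := fun p => by
        rw [show Sym2.map σ (Sym2.map σ.symm p) = Sym2.map (σ ∘ σ.symm) p by
          rw [Sym2.map_comp]; rfl]
        simp }
    (fun p => not_congr (Sym2.isDiag_map σ.injective).symm)

variable (K : Type*) [Field K]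

/-- `R := K[x_{{i,j}}]`, the six-variable polynomial ring on the variables indexed by
the two-element subsets of `{1,2,3,4}`. -/
abbrev R4 : Type _ := MvPolynomial PairIdx K

/-- The action of `σ ∈ S₄` on `R`, `σ · x_{{i,j}} = x_{{σ(i),σ(j)}}`, as a `K`-algebra
homomorphism. -/
def actS4 (σ : Equiv.Perm (Fin 4)) : R4 K →ₐ[K] R4 K := rename (pairPerm σ)

/-- The invariant subalgebra `R^{S₄}`. -/
def S4Inv : Subalgebra K (R4 K) :=
  ⨅ σ : Equiv.Perm (Fin 4), AlgHom.equalizer (actS4 K σ) (AlgHom.id K (R4 K))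

/-- `x₁ = x_{{1,2}} + x_{{3,4}}`, `x₂ = x_{{1,3}} + x_{{2,4}}`, `x₃ = x_{{1,4}} + x_{{2,3}}`
(vertices renamed `1,2,3,4 → 0,1,2,3`). -/
def xg : Fin 3 → R4 K :=
  ![X (pr 0 1 (by decide)) + X (pr 2 3 (by decide)),
    X (pr 0 2 (by decide)) + X (pr 1 3 (by decide)),
    X (pr 0 3 (by decide)) + X (pr 1 2 (by decide))]

/-- `z₁ = x_{{1,2}} − x_{{3,4}}`, `z₂ = x_{{1,3}} − x_{{2,4}}`, `z₃ = x_{{1,4}} − x_{{2,3}}`. -/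
def zg : Fin 3 → R4 K :=
  ![X (pr 0 1 (by decide)) - X (pr 2 3 (by decide)),
    X (pr 0 2 (by decide)) - X (pr 1 3 (by decide)),
    X (pr 0 3 (by decide)) - X (pr 1 2 (by decide))]

/-- `[x^a z^{2b}] := Σ_{i=1}^{3} x_i^a z_i^{2b}`. -/
def pSum (a b : ℕ) : R4 K := ∑ i : Fin 3, xg K i ^ a * zg K i ^ (2 * b)

/-- The Klein four subgroup `H = {id, (12)(34), (13)(24), (14)(23)}` of `S₄`
(vertices renamed `1,2,3,4 → 0,1,2,3`). -/
def klein : Set (Equiv.Perm (Fin 4)) :=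
  {1, Equiv.swap 0 1 * Equiv.swap 2 3, Equiv.swap 0 2 * Equiv.swap 1 3,
    Equiv.swap 0 3 * Equiv.swap 1 2}

/-- The subalgebra `R^H` of `H`-invariants. -/
def HInv : Subalgebra K (R4 K) :=
  ⨅ σ ∈ klein, AlgHom.equalizer (actS4 K σ) (AlgHom.id K (R4 K))

/-! ### Auxiliary machinery for the proof -/

lemma pr_swap (a b : Fin 4) (h : a ≠ b) : pr a b h = pr b a h.symm :=
  Subtype.ext (Sym2.eq_swap)

/-- The three non-identity elements of the Klein subgroup. -/
def sigH : Fin 3 → Equiv.Perm (Fin 4) :=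
  ![Equiv.swap 0 1 * Equiv.swap 2 3, Equiv.swap 0 2 * Equiv.swap 1 3,
    Equiv.swap 0 3 * Equiv.swap 1 2]

/-- The six elements x₁ x₂ x₃ z₁ z₂ z₃ as a vector. -/
def vv : Fin 6 → R4 K := ![xg K 0, xg K 1, xg K 2, zg K 0, zg K 1, zg K 2]

def zi : Fin 3 → Fin 6 := ![3, 4, 5]

/-- The sign-change substitution corresponding to `sigH i`. -/
def flip6 (i : Fin 3) : Fin 6 → MvPolynomial (Fin 6) K :=
  fun j => if j.val < 3 ∨ j = zi i then X j else - X j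

lemma sigH0 : sigH 0 = Equiv.swap 0 1 * Equiv.swap 2 3 := rfl
lemma sigH1 : sigH 1 = Equiv.swap 0 2 * Equiv.swap 1 3 := rfl
lemma sigH2 : sigH 2 = Equiv.swap 0 3 * Equiv.swap 1 2 := rfl

lemma xg0l : xg K 0 = X (pr 0 1 (by decide)) + X (pr 2 3 (by decide)) := rfl
lemma xg1l : xg K 1 = X (pr 0 2 (by decide)) + X (pr 1 3 (by decide)) := rfl
lemma xg2l : xg K 2 = X (pr 0 3 (by decide)) + X (pr 1 2 (by decide)) := rfl
lemma zg0l : zg K 0 = X (pr 0 1 (by decide)) - X (pr 2 3 (by decide)) := rfl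
lemma zg1l : zg K 1 = X (pr 0 2 (by decide)) - X (pr 1 3 (by decide)) := rfl
lemma zg2l : zg K 2 = X (pr 0 3 (by decide)) - X (pr 1 2 (by decide)) := rfl

lemma vv0 : vv K 0 = xg K 0 := rfl
lemma vv1 : vv K 1 = xg K 1 := rfl
lemma vv2 : vv K 2 = xg K 2 := rfl
lemma vv3 : vv K 3 = zg K 0 := rfl
lemma vv4 : vv K 4 = zg K 1 := rfl
lemma vv5 : vv K 5 = zg K 2 := rfl

lemma act_pair (σ : Equiv.Perm (Fin 4)) (c d : Fin 4) {a b : Fin 4} {h : a ≠ b}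
    (h' : c ≠ d) (hp : pairPerm σ (pr a b h) = pr c d h') :
    actS4 K σ (X (pr a b h) : R4 K) = X (pr c d h') := by
  simp [actS4, hp]

lemma act_xg (i k : Fin 3) : actS4 K (sigH i) (xg K k) = xg K k := by
  fin_cases i <;> fin_cases k <;>
    simp only [Fin.zero_eta, Fin.mk_one, sigH0, sigH1, sigH2, xg0l, xg1l, xg2l, map_add,
      Fin.isValue, show (⟨2, by omega⟩ : Fin 3) = 2 from rfl]
  · rw [act_pair K _ 0 1 (by decide) (by decide), act_pair K _ 2 3 (by decide) (by decide)]
  · rw [act_pair K _ 1 3 (by decide) (by decide), act_pair K _ 0 2 (by decide) (by decide)]; ring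
  · rw [act_pair K _ 1 2 (by decide) (by decide), act_pair K _ 0 3 (by decide) (by decide)]; ring
  · rw [act_pair K _ 2 3 (by decide) (by decide), act_pair K _ 0 1 (by decide) (by decide)]; ring
  · rw [act_pair K _ 0 2 (by decide) (by decide), act_pair K _ 1 3 (by decide) (by decide)]
  · rw [act_pair K _ 1 2 (by decide) (by decide), act_pair K _ 0 3 (by decide) (by decide)]; ring
  · rw [act_pair K _ 2 3 (by decide) (by decide), act_pair K _ 0 1 (by decide) (by decide)]; ring
  · rw [act_pair K _ 1 3 (by decide) (by decide), act_pair K _ 0 2 (by decide) (by decide)]; ring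
  · rw [act_pair K _ 0 3 (by decide) (by decide), act_pair K _ 1 2 (by decide) (by decide)]

lemma act_zg (i k : Fin 3) :
    actS4 K (sigH i) (zg K k) = if i = k then zg K k else - zg K k := by
  fin_cases i <;> fin_cases k <;>
    simp only [Fin.zero_eta, Fin.mk_one, sigH0, sigH1, sigH2, zg0l, zg1l, zg2l, map_sub,
      Fin.isValue, show (⟨2, by omega⟩ : Fin 3) = 2 from rfl]
  · rw [if_pos trivial, act_pair K _ 0 1 (by decide) (by decide),
      act_pair K _ 2 3 (by decide) (by decide)]
  · rw [if_neg (by decide), act_pair K _ 1 3 (by decide) (by decide),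
      act_pair K _ 0 2 (by decide) (by decide)]; ring
  · rw [if_neg (by decide), act_pair K _ 1 2 (by decide) (by decide),
      act_pair K _ 0 3 (by decide) (by decide)]; ring
  · rw [if_neg (by decide), act_pair K _ 2 3 (by decide) (by decide),
      act_pair K _ 0 1 (by decide) (by decide)]; ring
  · rw [if_pos trivial, act_pair K _ 0 2 (by decide) (by decide),
      act_pair K _ 1 3 (by decide) (by decide)]
  · rw [if_neg (by decide), act_pair K _ 1 2 (by decide) (by decide),
      act_pair K _ 0 3 (by decide) (by decide)]; ring
  · rw [if_neg (by decide), act_pair K _ 2 3 (by decide) (by decide),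
      act_pair K _ 0 1 (by decide) (by decide)]; ring
  · rw [if_neg (by decide), act_pair K _ 1 3 (by decide) (by decide),
      act_pair K _ 0 2 (by decide) (by decide)]; ring
  · rw [if_pos trivial, act_pair K _ 0 3 (by decide) (by decide),
      act_pair K _ 1 2 (by decide) (by decide)]

lemma act_one (p : R4 K) : actS4 K 1 p = p := by
  have h : pairPerm 1 = Equiv.refl PairIdx := by
    refine Equiv.ext fun j => Subtype.ext ?_
    show Sym2.map (⇑(1 : Equiv.Perm (Fin 4))) j.val = j.val
    rw [show ⇑(1 : Equiv.Perm (Fin 4)) = id from rfl, Sym2.map_id, id]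
  simp [actS4, h, rename_id]

def gens : Set (R4 K) :=
  {xg K 0, xg K 1, xg K 2, zg K 0 ^ 2, zg K 1 ^ 2, zg K 2 ^ 2,
    zg K 0 * zg K 1 * zg K 2}

lemma flip_monomial (i : Fin 3) (d : Fin 6 →₀ ℕ) (c : K) :
    aeval (flip6 K i) (monomial d c) =
      ((-1 : K) ^ (![d 4 + d 5, d 3 + d 5, d 3 + d 4] i)) • monomial d c := by
  fin_cases i <;>
    simp only [Fin.zero_eta, Fin.mk_one, Fin.isValue,
      show (⟨2, by omega⟩ : Fin 3) = (2 : Fin 3) from rfl]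
  · rw [aeval_monomial, Finsupp.prod_fintype _ _ (fun j => pow_zero _), Fin.prod_univ_six,
      show flip6 K 0 0 = (X 0 : MvPolynomial (Fin 6) K) from rfl,
      show flip6 K 0 1 = (X 1 : MvPolynomial (Fin 6) K) from rfl,
      show flip6 K 0 2 = (X 2 : MvPolynomial (Fin 6) K) from rfl,
      show flip6 K 0 3 = (X 3 : MvPolynomial (Fin 6) K) from rfl,
      show flip6 K 0 4 = (- X 4 : MvPolynomial (Fin 6) K) from rfl,
      show flip6 K 0 5 = (- X 5 : MvPolynomial (Fin 6) K) from rfl,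
      smul_eq_C_mul, monomial_eq, Finsupp.prod_fintype _ _ (fun j => pow_zero _),
      Fin.prod_univ_six, algebraMap_eq,
      show (![d 4 + d 5, d 3 + d 5, d 3 + d 4] (0 : Fin 3)) = d 4 + d 5 from rfl,
      pow_add ((-1 : K)), map_mul, map_pow, map_pow, map_neg, C_1,
      neg_pow (X 4 : MvPolynomial (Fin 6) K), neg_pow (X 5 : MvPolynomial (Fin 6) K)]
    ring
  · rw [aeval_monomial, Finsupp.prod_fintype _ _ (fun j => pow_zero _), Fin.prod_univ_six,
      show flip6 K 1 0 = (X 0 : MvPolynomial (Fin 6) K) from rfl,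
      show flip6 K 1 1 = (X 1 : MvPolynomial (Fin 6) K) from rfl,
      show flip6 K 1 2 = (X 2 : MvPolynomial (Fin 6) K) from rfl,
      show flip6 K 1 3 = (- X 3 : MvPolynomial (Fin 6) K) from rfl,
      show flip6 K 1 4 = (X 4 : MvPolynomial (Fin 6) K) from rfl,
      show flip6 K 1 5 = (- X 5 : MvPolynomial (Fin 6) K) from rfl,
      smul_eq_C_mul, monomial_eq, Finsupp.prod_fintype _ _ (fun j => pow_zero _),
      Fin.prod_univ_six, algebraMap_eq,
      show (![d 4 + d 5, d 3 + d 5, d 3 + d 4] (1 : Fin 3)) = d 3 + d 5 from rfl,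
      pow_add ((-1 : K)), map_mul, map_pow, map_pow, map_neg, C_1,
      neg_pow (X 3 : MvPolynomial (Fin 6) K), neg_pow (X 5 : MvPolynomial (Fin 6) K)]
    ring
  · rw [aeval_monomial, Finsupp.prod_fintype _ _ (fun j => pow_zero _), Fin.prod_univ_six,
      show flip6 K 2 0 = (X 0 : MvPolynomial (Fin 6) K) from rfl,
      show flip6 K 2 1 = (X 1 : MvPolynomial (Fin 6) K) from rfl,
      show flip6 K 2 2 = (X 2 : MvPolynomial (Fin 6) K) from rfl,
      show flip6 K 2 3 = (- X 3 : MvPolynomial (Fin 6) K) from rfl,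
      show flip6 K 2 4 = (- X 4 : MvPolynomial (Fin 6) K) from rfl,
      show flip6 K 2 5 = (X 5 : MvPolynomial (Fin 6) K) from rfl,
      smul_eq_C_mul, monomial_eq, Finsupp.prod_fintype _ _ (fun j => pow_zero _),
      Fin.prod_univ_six, algebraMap_eq,
      show (![d 4 + d 5, d 3 + d 5, d 3 + d 4] (2 : Fin 3)) = d 3 + d 4 from rfl,
      pow_add ((-1 : K)), map_mul, map_pow, map_pow, map_neg, C_1,
      neg_pow (X 3 : MvPolynomial (Fin 6) K), neg_pow (X 4 : MvPolynomial (Fin 6) K)]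
    ring

lemma good_mem (d : Fin 6 →₀ ℕ) (c : K) (h4 : d 4 % 2 = d 3 % 2) (h5 : d 5 % 2 = d 3 % 2) :
    aeval (vv K) (monomial d c) ∈ Algebra.adjoin K (gens K) := by
  have hx0 : xg K 0 ∈ Algebra.adjoin K (gens K) := Algebra.subset_adjoin (Set.mem_insert _ _)
  have hx1 : xg K 1 ∈ Algebra.adjoin K (gens K) := Algebra.subset_adjoin (Set.mem_insert_of_mem _ (Set.mem_insert _ _))
  have hx2 : xg K 2 ∈ Algebra.adjoin K (gens K) := Algebra.subset_adjoin (Set.mem_insert_of_mem _ (Set.mem_insert_of_mem _ (Set.mem_insert _ _)))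
  have hz0 : zg K 0 ^ 2 ∈ Algebra.adjoin K (gens K) := Algebra.subset_adjoin (Set.mem_insert_of_mem _ (Set.mem_insert_of_mem _ (Set.mem_insert_of_mem _ (Set.mem_insert _ _))))
  have hz1 : zg K 1 ^ 2 ∈ Algebra.adjoin K (gens K) := Algebra.subset_adjoin (Set.mem_insert_of_mem _ (Set.mem_insert_of_mem _ (Set.mem_insert_of_mem _ (Set.mem_insert_of_mem _ (Set.mem_insert _ _)))))
  have hz2 : zg K 2 ^ 2 ∈ Algebra.adjoin K (gens K) := Algebra.subset_adjoin (Set.mem_insert_of_mem _ (Set.mem_insert_of_mem _ (Set.mem_insert_of_mem _ (Set.mem_insert_of_mem _ (Set.mem_insert_of_mem _ (Set.mem_insert _ _))))))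
  have hzz : zg K 0 * zg K 1 * zg K 2 ∈ Algebra.adjoin K (gens K) :=
    Algebra.subset_adjoin (Set.mem_insert_of_mem _ (Set.mem_insert_of_mem _ (Set.mem_insert_of_mem _ (Set.mem_insert_of_mem _ (Set.mem_insert_of_mem _ (Set.mem_insert_of_mem _ rfl))))))
  rw [aeval_monomial, Finsupp.prod_fintype _ _ (fun j => pow_zero _), Fin.prod_univ_six,
    vv0, vv1, vv2, vv3, vv4, vv5]
  rcases Nat.even_or_odd (d 3) with h3 | h3
  · obtain ⟨a3, e3⟩ := h3
    rw [show d 3 = 2 * a3 from by omega, show d 4 = 2 * (d 4 / 2) from by omega,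
      show d 5 = 2 * (d 5 / 2) from by omega, pow_mul, pow_mul, pow_mul]
    exact mul_mem (Subalgebra.algebraMap_mem _ c)
      (mul_mem (mul_mem (mul_mem (mul_mem (mul_mem (pow_mem hx0 _) (pow_mem hx1 _))
        (pow_mem hx2 _)) (pow_mem hz0 _)) (pow_mem hz1 _)) (pow_mem hz2 _))
  · obtain ⟨a3, e3⟩ := h3
    rw [show d 3 = 2 * a3 + 1 from by omega, show d 4 = 2 * (d 4 / 2) + 1 from by omega,
      show d 5 = 2 * (d 5 / 2) + 1 from by omega]
    have key : xg K 0 ^ d 0 * xg K 1 ^ d 1 * xg K 2 ^ d 2 * zg K 0 ^ (2 * a3 + 1) *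
        zg K 1 ^ (2 * (d 4 / 2) + 1) * zg K 2 ^ (2 * (d 5 / 2) + 1) =
        xg K 0 ^ d 0 * xg K 1 ^ d 1 * xg K 2 ^ d 2 *
          ((zg K 0 ^ 2) ^ a3 * (zg K 1 ^ 2) ^ (d 4 / 2) * (zg K 2 ^ 2) ^ (d 5 / 2)) *
          (zg K 0 * zg K 1 * zg K 2) := by ring
    rw [key]
    exact mul_mem (Subalgebra.algebraMap_mem _ c)
      (mul_mem (mul_mem (mul_mem (mul_mem (pow_mem hx0 _) (pow_mem hx1 _)) (pow_mem hx2 _))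
        (mul_mem (mul_mem (pow_mem hz0 _) (pow_mem hz1 _)) (pow_mem hz2 _))) hzz)

lemma foursum_mem (d : Fin 6 →₀ ℕ) (c : K) :
    aeval (vv K) (monomial d c + aeval (flip6 K 0) (monomial d c) +
      aeval (flip6 K 1) (monomial d c) + aeval (flip6 K 2) (monomial d c)) ∈
      Algebra.adjoin K (gens K) := by
  rw [flip_monomial, flip_monomial, flip_monomial,
    show (![d 4 + d 5, d 3 + d 5, d 3 + d 4] (0 : Fin 3)) = d 4 + d 5 from rfl,
    show (![d 4 + d 5, d 3 + d 5, d 3 + d 4] (1 : Fin 3)) = d 3 + d 5 from rfl,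
    show (![d 4 + d 5, d 3 + d 5, d 3 + d 4] (2 : Fin 3)) = d 3 + d 4 from rfl]
  rcases Nat.even_or_odd (d 3) with h3 | h3 <;> rcases Nat.even_or_odd (d 4) with h4 | h4 <;>
    rcases Nat.even_or_odd (d 5) with h5 | h5 <;>
    simp only [Nat.even_iff, Nat.odd_iff] at h3 h4 h5
  -- (E,E,E)
  · rw [Even.neg_one_pow (by simp only [Nat.even_iff]; omega),
      Even.neg_one_pow (by simp only [Nat.even_iff]; omega),
      Even.neg_one_pow (by simp only [Nat.even_iff]; omega), one_smul]
    simp only [map_add]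
    have h := good_mem K d c (by omega) (by omega)
    exact add_mem (add_mem (add_mem h h) h) h
  -- (E,E,O)
  · rw [Odd.neg_one_pow (by simp only [Nat.odd_iff]; omega),
      Odd.neg_one_pow (by simp only [Nat.odd_iff]; omega),
      Even.neg_one_pow (by simp only [Nat.even_iff]; omega), one_smul, neg_one_smul]
    rw [show monomial d c + -monomial d c + -monomial d c + monomial d c = 0 from by ring]
    simp only [map_zero]
    exact zero_mem _
  -- (E,O,E)
  · rw [Odd.neg_one_pow (by simp only [Nat.odd_iff]; omega),
      Even.neg_one_pow (by simp only [Nat.even_iff]; omega),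
      Odd.neg_one_pow (by simp only [Nat.odd_iff]; omega), one_smul, neg_one_smul]
    rw [show monomial d c + -monomial d c + monomial d c + -monomial d c = 0 from by ring]
    simp only [map_zero]
    exact zero_mem _
  -- (E,O,O)
  · rw [Even.neg_one_pow (by simp only [Nat.even_iff]; omega),
      Odd.neg_one_pow (by simp only [Nat.odd_iff]; omega),
      Odd.neg_one_pow (by simp only [Nat.odd_iff]; omega), one_smul, neg_one_smul]
    rw [show monomial d c + monomial d c + -monomial d c + -monomial d c = 0 from by ring]
    simp only [map_zero]
    exact zero_mem _
  -- (O,E,E)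
  · rw [Even.neg_one_pow (by simp only [Nat.even_iff]; omega),
      Odd.neg_one_pow (by simp only [Nat.odd_iff]; omega),
      Odd.neg_one_pow (by simp only [Nat.odd_iff]; omega), one_smul, neg_one_smul]
    rw [show monomial d c + monomial d c + -monomial d c + -monomial d c = 0 from by ring]
    simp only [map_zero]
    exact zero_mem _
  -- (O,E,O)
  · rw [Odd.neg_one_pow (by simp only [Nat.odd_iff]; omega),
      Even.neg_one_pow (by simp only [Nat.even_iff]; omega),
      Odd.neg_one_pow (by simp only [Nat.odd_iff]; omega), one_smul, neg_one_smul]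
    rw [show monomial d c + -monomial d c + monomial d c + -monomial d c = 0 from by ring]
    simp only [map_zero]
    exact zero_mem _
  -- (O,O,E)
  · rw [Odd.neg_one_pow (by simp only [Nat.odd_iff]; omega),
      Odd.neg_one_pow (by simp only [Nat.odd_iff]; omega),
      Even.neg_one_pow (by simp only [Nat.even_iff]; omega), one_smul, neg_one_smul]
    rw [show monomial d c + -monomial d c + -monomial d c + monomial d c = 0 from by ring]
    simp only [map_zero]
    exact zero_mem _
  -- (O,O,O)
  · rw [Even.neg_one_pow (by simp only [Nat.even_iff]; omega),
      Even.neg_one_pow (by simp only [Nat.even_iff]; omega),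
      Even.neg_one_pow (by simp only [Nat.even_iff]; omega), one_smul]
    simp only [map_add]
    have h := good_mem K d c (by omega) (by omega)
    exact add_mem (add_mem (add_mem h h) h) h

lemma proj_mem (q : MvPolynomial (Fin 6) K) :
    aeval (vv K) (q + aeval (flip6 K 0) q + aeval (flip6 K 1) q + aeval (flip6 K 2) q) ∈
      Algebra.adjoin K (gens K) := by
  rw [show q = ∑ v ∈ q.support, monomial v (coeff v q) from (support_sum_monomial_coeff q).symm]
  simp only [map_sum, ← Finset.sum_add_distrib]
  exact sum_mem fun d _ => foursum_mem K d _

lemma inter (i : Fin 3) :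
    (aeval (vv K)).comp (aeval (flip6 K i)) =
      (actS4 K (sigH i)).comp (aeval (vv K) : MvPolynomial (Fin 6) K →ₐ[K] R4 K) := by
  apply MvPolynomial.algHom_ext
  intro j
  simp only [AlgHom.comp_apply, aeval_X]
  fin_cases i <;> fin_cases j <;>
    simp only [Fin.zero_eta, Fin.mk_one, Fin.isValue,
      show (⟨2, by omega⟩ : Fin 3) = (2 : Fin 3) from rfl,
      show (⟨2, by omega⟩ : Fin 6) = (2 : Fin 6) from rfl,
      show (⟨3, by omega⟩ : Fin 6) = (3 : Fin 6) from rfl,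
      show (⟨4, by omega⟩ : Fin 6) = (4 : Fin 6) from rfl,
      show (⟨5, by omega⟩ : Fin 6) = (5 : Fin 6) from rfl]
  · rw [show flip6 K 0 0 = (X 0 : MvPolynomial (Fin 6) K) from rfl, aeval_X, vv0, act_xg]
  · rw [show flip6 K 0 1 = (X 1 : MvPolynomial (Fin 6) K) from rfl, aeval_X, vv1, act_xg]
  · rw [show flip6 K 0 2 = (X 2 : MvPolynomial (Fin 6) K) from rfl, aeval_X, vv2, act_xg]
  · rw [show flip6 K 0 3 = (X 3 : MvPolynomial (Fin 6) K) from rfl, aeval_X, vv3, act_zg, if_pos rfl]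
  · rw [show flip6 K 0 4 = (- X 4 : MvPolynomial (Fin 6) K) from rfl, map_neg, aeval_X, vv4, act_zg, if_neg (by decide)]
  · rw [show flip6 K 0 5 = (- X 5 : MvPolynomial (Fin 6) K) from rfl, map_neg, aeval_X, vv5, act_zg, if_neg (by decide)]
  · rw [show flip6 K 1 0 = (X 0 : MvPolynomial (Fin 6) K) from rfl, aeval_X, vv0, act_xg]
  · rw [show flip6 K 1 1 = (X 1 : MvPolynomial (Fin 6) K) from rfl, aeval_X, vv1, act_xg]
  · rw [show flip6 K 1 2 = (X 2 : MvPolynomial (Fin 6) K) from rfl, aeval_X, vv2, act_xg]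
  · rw [show flip6 K 1 3 = (- X 3 : MvPolynomial (Fin 6) K) from rfl, map_neg, aeval_X, vv3, act_zg, if_neg (by decide)]
  · rw [show flip6 K 1 4 = (X 4 : MvPolynomial (Fin 6) K) from rfl, aeval_X, vv4, act_zg, if_pos rfl]
  · rw [show flip6 K 1 5 = (- X 5 : MvPolynomial (Fin 6) K) from rfl, map_neg, aeval_X, vv5, act_zg, if_neg (by decide)]
  · rw [show flip6 K 2 0 = (X 0 : MvPolynomial (Fin 6) K) from rfl, aeval_X, vv0, act_xg]
  · rw [show flip6 K 2 1 = (X 1 : MvPolynomial (Fin 6) K) from rfl, aeval_X, vv1, act_xg]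
  · rw [show flip6 K 2 2 = (X 2 : MvPolynomial (Fin 6) K) from rfl, aeval_X, vv2, act_xg]
  · rw [show flip6 K 2 3 = (- X 3 : MvPolynomial (Fin 6) K) from rfl, map_neg, aeval_X, vv3, act_zg, if_neg (by decide)]
  · rw [show flip6 K 2 4 = (- X 4 : MvPolynomial (Fin 6) K) from rfl, map_neg, aeval_X, vv4, act_zg, if_neg (by decide)]
  · rw [show flip6 K 2 5 = (X 5 : MvPolynomial (Fin 6) K) from rfl, aeval_X, vv5, act_zg, if_pos rfl]

lemma half_mem {T : Subalgebra K (R4 K)} (h2 : (2 : K) ≠ 0) {u w : R4 K}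
    (hu : u ∈ T) (hw : w ∈ T) (p : PairIdx) (h : u + w = (2 : K) • X p) :
    (X p : R4 K) ∈ T := by
  have he : (X p : R4 K) = (2⁻¹ : K) • (u + w) := by
    rw [h, smul_smul, inv_mul_cancel₀ h2, one_smul]
  rw [he]
  exact T.smul_mem (T.add_mem hu hw) _

lemma vtop (h2 : (2 : K) ≠ 0) : Algebra.adjoin K (Set.range (vv K)) = ⊤ := by
  rw [eq_top_iff, ← MvPolynomial.adjoin_range_X]
  apply Algebra.adjoin_le
  rintro _ ⟨j, rfl⟩
  obtain ⟨s, hs⟩ := j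
  revert hs
  induction s using Sym2.ind with
  | _ a b =>
    intro hs
    have hab : a ≠ b := fun h => hs (Sym2.mk_isDiag_iff.mpr h)
    have hmem : ∀ k : Fin 6, vv K k ∈ Algebra.adjoin K (Set.range (vv K)) :=
      fun k => Algebra.subset_adjoin ⟨k, rfl⟩
    show (X (pr a b hab) : R4 K) ∈ _
    fin_cases a <;> fin_cases b <;> first | exact absurd rfl hab | skip
    · exact half_mem K h2 (hmem 0) (hmem 3) _
        (by rw [vv0, vv3, xg0l, zg0l, two_smul]; ring_nf; exact rfl)
    · exact half_mem K h2 (hmem 1) (hmem 4) _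
        (by rw [vv1, vv4, xg1l, zg1l, two_smul]; ring_nf; exact rfl)
    · exact half_mem K h2 (hmem 2) (hmem 5) _
        (by rw [vv2, vv5, xg2l, zg2l, two_smul]; ring_nf; exact rfl)
    · rw [pr_swap]
      exact half_mem K h2 (hmem 0) (hmem 3) _
        (by rw [vv0, vv3, xg0l, zg0l, two_smul]; ring_nf; exact rfl)
    · exact half_mem K h2 (hmem 2) ((Algebra.adjoin K _).neg_mem (hmem 5)) _
        (by rw [vv2, vv5, xg2l, zg2l, two_smul]; ring_nf; exact rfl)
    · exact half_mem K h2 (hmem 1) ((Algebra.adjoin K _).neg_mem (hmem 4)) _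
        (by rw [vv1, vv4, xg1l, zg1l, two_smul]; ring_nf; exact rfl)
    · rw [pr_swap]
      exact half_mem K h2 (hmem 1) (hmem 4) _
        (by rw [vv1, vv4, xg1l, zg1l, two_smul]; ring_nf; exact rfl)
    · rw [pr_swap]
      exact half_mem K h2 (hmem 2) ((Algebra.adjoin K _).neg_mem (hmem 5)) _
        (by rw [vv2, vv5, xg2l, zg2l, two_smul]; ring_nf; exact rfl)
    · exact half_mem K h2 (hmem 0) ((Algebra.adjoin K _).neg_mem (hmem 3)) _
        (by rw [vv0, vv3, xg0l, zg0l, two_smul]; ring_nf; exact rfl)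
    · rw [pr_swap]
      exact half_mem K h2 (hmem 2) (hmem 5) _
        (by rw [vv2, vv5, xg2l, zg2l, two_smul]; ring_nf; exact rfl)
    · rw [pr_swap]
      exact half_mem K h2 (hmem 1) ((Algebra.adjoin K _).neg_mem (hmem 4)) _
        (by rw [vv1, vv4, xg1l, zg1l, two_smul]; ring_nf; exact rfl)
    · rw [pr_swap]
      exact half_mem K h2 (hmem 0) ((Algebra.adjoin K _).neg_mem (hmem 3)) _
        (by rw [vv0, vv3, xg0l, zg0l, two_smul]; ring_nf; exact rfl)

/-- Let `K` be a field of characteristic `0` or `> 3`.  The subalgebra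
`R^H` of `H`-invariants is generated as a `K`-algebra by the seven elements
`x₁, x₂, x₃, z₁², z₂², z₃², z₁z₂z₃`. -/
theorem HInv_generated_by_seven
    (hchar : ringChar K = 0 ∨ 3 < ringChar K) :
    Algebra.adjoin K
      {xg K 0, xg K 1, xg K 2, zg K 0 ^ 2, zg K 1 ^ 2, zg K 2 ^ 2,
        zg K 0 * zg K 1 * zg K 2}
      = HInv K := by
  have h2 : (2 : K) ≠ 0 := by
    intro h
    have hd : ringChar K ∣ 2 := ringChar.dvd (by exact_mod_cast h)
    rcases hchar with h0 | h3
    · rw [h0] at hd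
      exact absurd (zero_dvd_iff.mp hd) (by norm_num)
    · have := Nat.le_of_dvd (by norm_num) hd
      omega
  have h4 : (4 : K) ≠ 0 := by
    have he : (4 : K) = 2 * 2 := by norm_num
    rw [he]
    exact mul_ne_zero h2 h2
  show Algebra.adjoin K (gens K) = HInv K
  apply le_antisymm
  · rw [Algebra.adjoin_le_iff]
    intro g hg
    have key : (∀ i : Fin 3, actS4 K (sigH i) g = g) → g ∈ HInv K := by
      intro hfix
      simp only [HInv, Algebra.mem_iInf] at *
      intro σ hσ
      rw [AlgHom.mem_equalizer, AlgHom.id_apply]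
      simp only [klein, Set.mem_insert_iff, Set.mem_singleton_iff] at hσ
      rcases hσ with rfl | rfl | rfl | rfl
      · exact act_one K g
      · exact hfix 0
      · exact hfix 1
      · exact hfix 2
    simp only [gens, Set.mem_insert_iff, Set.mem_singleton_iff] at hg
    rcases hg with rfl | rfl | rfl | rfl | rfl | rfl | rfl <;> apply key <;> intro i
    · exact act_xg K i 0
    · exact act_xg K i 1
    · exact act_xg K i 2
    · rw [map_pow, act_zg]; split_ifs <;> ring
    · rw [map_pow, act_zg]; split_ifs <;> ring
    · rw [map_pow, act_zg]; split_ifs <;> ring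
    · rw [map_mul, map_mul, act_zg, act_zg, act_zg]
      fin_cases i <;>
        simp only [Fin.zero_eta, Fin.mk_one,
          show (⟨2, by omega⟩ : Fin 3) = (2 : Fin 3) from rfl, reduceIte,
          if_neg (show ¬((0 : Fin 3) = 1) from by decide),
          if_neg (show ¬((0 : Fin 3) = 2) from by decide),
          if_neg (show ¬((1 : Fin 3) = 0) from by decide),
          if_neg (show ¬((1 : Fin 3) = 2) from by decide),
          if_neg (show ¬((2 : Fin 3) = 0) from by decide),
          if_neg (show ¬((2 : Fin 3) = 1) from by decide)] <;>
        ring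
  · intro p hp
    have hfix : ∀ i : Fin 3, actS4 K (sigH i) p = p := by
      intro i
      have h1 : ∀ σ ∈ klein, actS4 K σ p = p := by
        simp only [HInv, Algebra.mem_iInf] at hp
        intro σ hσ
        have hh := hp σ hσ
        rwa [AlgHom.mem_equalizer, AlgHom.id_apply] at hh
      apply h1
      fin_cases i
      · exact Set.mem_insert_of_mem _ (Set.mem_insert _ _)
      · exact Set.mem_insert_of_mem _ (Set.mem_insert_of_mem _ (Set.mem_insert _ _))
      · exact Set.mem_insert_of_mem _ (Set.mem_insert_of_mem _ (Set.mem_insert_of_mem _ rfl))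
    obtain ⟨q, rfl⟩ : ∃ q, aeval (vv K) q = p := by
      have h1 : p ∈ (aeval (vv K) : MvPolynomial (Fin 6) K →ₐ[K] R4 K).range := by
        rw [← Algebra.adjoin_range_eq_range_aeval, vtop K h2]
        trivial
      exact h1
    have hflip : ∀ i : Fin 3, aeval (vv K) (aeval (flip6 K i) q) = aeval (vv K) q := by
      intro i
      have hc := congrArg (fun f : MvPolynomial (Fin 6) K →ₐ[K] R4 K => f q) (inter K i)
      simp only [AlgHom.comp_apply] at hc
      rw [hc]
      exact hfix i
    have hm := proj_mem K q
    rw [map_add, map_add, map_add, hflip 0, hflip 1, hflip 2] at hm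
    have heq : aeval (vv K) q =
        (4⁻¹ : K) • (aeval (vv K) q + aeval (vv K) q + aeval (vv K) q + aeval (vv K) q) := by
      rw [show (aeval (vv K) q + aeval (vv K) q + aeval (vv K) q + aeval (vv K) q)
          = (4 : K) • aeval (vv K) q from by
        rw [show (4 : K) = 1 + 1 + 1 + 1 from by norm_num, add_smul, add_smul, add_smul,
          one_smul],
        smul_smul, inv_mul_cancel₀ h4, one_smul]
    rw [heq]
    exact Subalgebra.smul_mem _ hm _

end
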